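/- Let π : X' → X be a finite morphism of schemes with X an integral normal variety over an algebraically closed field, let U ⊆ X be a dense open subscheme, and let s : U → X' be a section of π over U (π ∘ s = incl). Then s extends to a section s̃ : X → X' of π. -/

import Mathlib

open AlgebraicGeometry CategoryTheory

set_option maxHeartbeats 1000000


open AlgebraicGeometry CategoryTheory TopologicalSpace

set_option maxHeartbeats 1000000

namespace Stmt11Aux

variable {X X' : Scheme}

lemma exists_lift_fromSpecStalk [IsIntegral X]
    (hnormal : ∀ x : X, IsIntegrallyClosed (X.presheaf.stalk x))
    (π : X' ⟶ X) [IsFinite π] (x : X)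
    (ψ : Spec (X.functionField) ⟶ X')
    (hψ : ψ ≫ π = X.fromSpecStalk (genericPoint X)) :
    ∃ φ : Spec (X.presheaf.stalk x) ⟶ X',
      φ ≫ π = X.fromSpecStalk x ∧
      Spec.map (X.presheaf.stalkSpecializes (genericPoint_specializes x)) ≫ φ = ψ := by
  obtain ⟨V, hV, hxV⟩ : ∃ V : X.Opens, IsAffineOpen V ∧ x ∈ V :=
    ⟨_, isAffineOpen_opensRange (X.affineCover.f (X.affineCover.idx x)), X.affineCover.covers x⟩
  have hξV : genericPoint X ∈ V := (genericPoint_specializes x).mem_open V.2 hxV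
  have hW : IsAffineOpen (π ⁻¹ᵁ V) := hV.preimage π
  have halg : (algebraMap (X.presheaf.stalk x) X.functionField : _ →+* _)
      = (X.presheaf.stalkSpecializes (genericPoint_specializes x) : _ ⟶ _).hom := rfl
  -- `ψ` factors through `π ⁻¹ᵁ V`
  have hpre : ⊤ ≤ ψ ⁻¹ᵁ (π ⁻¹ᵁ V) := by
    intro pt _
    show π.base (ψ.base pt) ∈ V
    have h1 : π.base (ψ.base pt) = (X.fromSpecStalk (genericPoint X)).base pt := by
      have := congrArg (fun f => f.base pt) hψ
      simpa using this
    rw [h1]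
    have h2 : (X.fromSpecStalk (genericPoint X)).base pt ∈
        Set.range (X.fromSpecStalk (genericPoint X)).base := Set.mem_range_self _
    rw [Scheme.range_fromSpecStalk] at h2
    exact h2.mem_open V.2 hξV
  have keyA : Spec.map (ψ.appLE (π ⁻¹ᵁ V) ⊤ hpre ≫ (Scheme.ΓSpecIso X.functionField).hom)
      ≫ hW.fromSpec = ψ := by
    rw [Spec.map_comp, Category.assoc,
      IsAffineOpen.SpecMap_appLE_fromSpec ψ hW (isAffineOpen_top _) hpre,
      IsAffineOpen.fromSpec_top, ← Category.assoc, Scheme.isoSpec_Spec_inv,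
      ← Spec.map_comp, Iso.inv_hom_id, Spec.map_id, Category.id_comp]
  have keyB : π.appLE V (π ⁻¹ᵁ V) le_rfl ≫ ψ.appLE (π ⁻¹ᵁ V) ⊤ hpre
        ≫ (Scheme.ΓSpecIso X.functionField).hom
      = X.presheaf.germ V x hxV ≫ X.presheaf.stalkSpecializes (genericPoint_specializes x) := by
    apply Spec.map_injective
    rw [← cancel_mono hV.fromSpec]
    rw [Spec.map_comp (π.appLE V (π ⁻¹ᵁ V) le_rfl), Category.assoc,
      IsAffineOpen.SpecMap_appLE_fromSpec π hV hW le_rfl, ← Category.assoc, keyA, hψ]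
    have h5 : Spec.map (X.presheaf.germ V x hxV) ≫ hV.fromSpec = X.fromSpecStalk x := by
      rw [← hV.fromSpecStalk_eq_fromSpecStalk hxV]; rfl
    rw [Spec.map_comp, Category.assoc, h5, Scheme.SpecMap_stalkSpecializes_fromSpecStalk]
  -- the algebra: integral elements over an integrally closed stalk
  haveI : IsDomain (X.presheaf.stalk x) :=
    Function.Injective.isDomain _ (IsFractionRing.injective (X.presheaf.stalk x) X.functionField)
  haveI := hnormal x
  have hinj : Function.Injective (algebraMap (X.presheaf.stalk x) X.functionField) :=
    IsFractionRing.injective _ _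
  have hint : RingHom.IsIntegral (π.app V).hom := IsIntegralHom.isIntegral_app π V hV
  have happ : π.app V = π.appLE V (π ⁻¹ᵁ V) le_rfl := by
    rw [Scheme.Hom.app_eq_appLE]
  have hrange : ∀ b : Γ(X', π ⁻¹ᵁ V),
      ∃ r : X.presheaf.stalk x, algebraMap (X.presheaf.stalk x) X.functionField r
        = (ψ.appLE (π ⁻¹ᵁ V) ⊤ hpre ≫ (Scheme.ΓSpecIso X.functionField).hom) b := by
    intro b
    obtain ⟨p, hmonic, heval⟩ := hint b
    have hcomp : ((ψ.appLE (π ⁻¹ᵁ V) ⊤ hpre ≫ (Scheme.ΓSpecIso X.functionField).hom :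
          Γ(X', π ⁻¹ᵁ V) ⟶ X.functionField).hom : Γ(X', π ⁻¹ᵁ V) →+* X.functionField).comp
          (π.app V).hom
        = (algebraMap (X.presheaf.stalk x) X.functionField).comp (X.presheaf.germ V x hxV).hom := by
      ext a
      have := congrArg (fun f => f a) (keyB)
      simp only [CommRingCat.comp_apply] at this
      simpa [halg, happ] using this
    refine IsIntegrallyClosed.isIntegral_iff.mp ?_
    refine ⟨p.map (X.presheaf.germ V x hxV).hom, hmonic.map _, ?_⟩
    rw [Polynomial.eval₂_map, ← hcomp, ← Polynomial.hom_eval₂, heval, map_zero]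
  choose r hr using hrange
  let χ' : Γ(X', π ⁻¹ᵁ V) →+* (X.presheaf.stalk x) :=
    { toFun := r
      map_one' := hinj (by rw [hr, map_one, map_one])
      map_mul' := fun a b => hinj (by rw [hr, map_mul, map_mul, hr, hr])
      map_zero' := hinj (by rw [hr, map_zero, map_zero])
      map_add' := fun a b => hinj (by rw [hr, map_add, map_add, hr, hr]) }
  have hχ'K : (CommRingCat.ofHom (R := Γ(X', π ⁻¹ᵁ V)) (S := X.presheaf.stalk x) χ' :
      Γ(X', π ⁻¹ᵁ V) ⟶ X.presheaf.stalk x)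
        ≫ X.presheaf.stalkSpecializes (genericPoint_specializes x)
      = ψ.appLE (π ⁻¹ᵁ V) ⊤ hpre ≫ (Scheme.ΓSpecIso X.functionField).hom := by
    ext b
    have : algebraMap (X.presheaf.stalk x) X.functionField (r b) = _ := hr b
    simpa [halg, CommRingCat.comp_apply, χ'] using this
  have hχ'app : π.app V ≫ (CommRingCat.ofHom (R := Γ(X', π ⁻¹ᵁ V)) (S := X.presheaf.stalk x) χ' :
      Γ(X', π ⁻¹ᵁ V) ⟶ X.presheaf.stalk x)
      = X.presheaf.germ V x hxV := by
    ext a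
    apply hinj
    have h1 := congrArg (fun f => f ((π.app V) a)) hχ'K
    have h2 := congrArg (fun f => f a) keyB
    simp only [CommRingCat.comp_apply] at h1 h2 ⊢
    rw [halg]
    dsimp at h1 h2 ⊢
    rw [h1, happ]
    exact h2
  refine ⟨Spec.map (CommRingCat.ofHom (R := Γ(X', π ⁻¹ᵁ V)) (S := X.presheaf.stalk x) χ' :
      Γ(X', π ⁻¹ᵁ V) ⟶ X.presheaf.stalk x) ≫ hW.fromSpec, ?_, ?_⟩
  · rw [Category.assoc, ← IsAffineOpen.SpecMap_appLE_fromSpec π hV hW le_rfl,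
      ← Category.assoc, ← Spec.map_comp, ← happ, hχ'app]
    rw [← hV.fromSpecStalk_eq_fromSpecStalk hxV]; rfl
  · rw [← Category.assoc, ← Spec.map_comp, hχ'K, keyA]

open AlgebraicGeometry.Scheme in
lemma PartialMap.fromSpecStalkOfMem_generic [IsIntegral X] {Y : Scheme}
    (f : Scheme.PartialMap X Y) {x : X} (hx : x ∈ f.domain)
    (hξ : genericPoint X ∈ f.domain) :
    f.fromSpecStalkOfMem hξ
      = Spec.map (X.presheaf.stalkSpecializes (genericPoint_specializes x))
        ≫ f.fromSpecStalkOfMem hx := by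
  have h : f.domain.fromSpecStalkOfMem _ hξ
      = Spec.map (X.presheaf.stalkSpecializes (genericPoint_specializes x))
        ≫ f.domain.fromSpecStalkOfMem x hx := by
    rw [← cancel_mono f.domain.ι]
    rw [Category.assoc, Opens.fromSpecStalkOfMem_ι, Opens.fromSpecStalkOfMem_ι,
      Scheme.SpecMap_stalkSpecializes_fromSpecStalk]
  rw [PartialMap.fromSpecStalkOfMem, PartialMap.fromSpecStalkOfMem, h, Category.assoc]

end Stmt11Aux

/-- Let `π : X' → X` be a finite morphism of schemes where `X` is an integral,
normal variety (separated, finite type) over an algebraically closed field `k`, let `U ⊆ X`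
be a dense open subscheme, and let `s : U → X'` be a section of `π` over `U`
(i.e. `s ≫ π = U.ι`).  Then `s` extends to a section `s̃ : X → X'` of `π`. -/
theorem stmt_11 (k : Type) [Field k] [IsAlgClosed k]
    (X X' : Scheme) [IsIntegral X]
    (hnormal : ∀ x : X, IsIntegrallyClosed (X.presheaf.stalk x))
    (p : X ⟶ Spec (CommRingCat.of k))
    [LocallyOfFiniteType p] [QuasiCompact p] [AlgebraicGeometry.IsSeparated p]
    (π : X' ⟶ X) [IsFinite π]
    (U : X.Opens) (hU : Dense (U : Set X))
    (s : U.toScheme ⟶ X') (hs : s ≫ π = U.ι) :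
    ∃ st : X ⟶ X', st ≫ π = 𝟙 X ∧ U.ι ≫ st = s := by
  classical
  -- separatedness of `X` and `X'` (as abstract schemes)
  haveI : X.IsSeparated := ⟨by
    rw [← Limits.terminal.comp_from p]; infer_instance⟩
  haveI : X'.IsSeparated := ⟨by
    rw [← Limits.terminal.comp_from (π ≫ p)]; infer_instance⟩
  have hξU : genericPoint X ∈ U := by
    obtain ⟨u, hu⟩ := hU.nonempty
    exact (genericPoint_specializes u).mem_open U.2 hu
  -- the partial map given by `s` and the corresponding generic fiber map
  let f₀ : Scheme.PartialMap X X' := ⟨U, hU, s⟩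
  let ψ : Spec X.functionField ⟶ X' := U.fromSpecStalkOfMem _ hξU ≫ s
  have hψπ : ψ ≫ π = X.fromSpecStalk (genericPoint X) := by
    rw [Category.assoc, hs, Scheme.Opens.fromSpecStalkOfMem_ι]
  -- every point is in the domain of the induced rational map
  have key : ∀ x : X, x ∈ f₀.toRationalMap.domain := by
    intro x
    obtain ⟨φ, hφπ, hφψ⟩ := Stmt11Aux.exists_lift_fromSpecStalk hnormal π x ψ hψπ
    let fx := Scheme.PartialMap.ofFromSpecStalk (𝟙 X) π φ (by simpa using hφπ)
    have hmem : x ∈ fx.domain :=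
      Scheme.PartialMap.mem_domain_ofFromSpecStalk (𝟙 X) π φ _
    have hξmem : genericPoint X ∈ fx.domain :=
      (genericPoint_specializes x).mem_open fx.domain.2 hmem
    rw [Scheme.RationalMap.mem_domain]
    refine ⟨fx, hmem, ?_⟩
    rw [Scheme.PartialMap.toRationalMap_eq_iff]
    apply Scheme.PartialMap.equiv_of_fromSpecStalkOfMem_eq (x := genericPoint X) fx f₀
      hξmem hξU
    rw [Stmt11Aux.PartialMap.fromSpecStalkOfMem_generic fx hmem hξmem,
      Scheme.PartialMap.fromSpecStalkOfMem_ofFromSpecStalk, hφψ]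
    rfl
  have hdom : f₀.toRationalMap.domain = ⊤ := top_unique fun x _ => key x
  let G := f₀.toRationalMap.toPartialMap
  have hres : X.homOfLE f₀.le_domain_toRationalMap ≫ G.hom = s := by
    have := Scheme.PartialMap.toPartialMap_toRationalMap_restrict f₀
    exact this
  let st : X ⟶ X' := X.topIso.inv ≫ (X.isoOfEq hdom).inv ≫ G.hom
  have hιst : U.ι ≫ st = s := by
    have h1 : U.ι ≫ X.topIso.inv ≫ (X.isoOfEq hdom).inv
        = X.homOfLE f₀.le_domain_toRationalMap := by
      rw [← cancel_mono (f₀.toRationalMap.domain.ι)]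
      rw [Category.assoc, Category.assoc, Scheme.isoOfEq_inv_ι, Scheme.homOfLE_ι]
      rw [Scheme.toIso_inv_ι, Category.comp_id]
    show U.ι ≫ X.topIso.inv ≫ (X.isoOfEq hdom).inv ≫ G.hom = s
    exact ((congrArg (U.ι ≫ ·) (Category.assoc X.topIso.inv (X.isoOfEq hdom).inv G.hom).symm).trans
      (Category.assoc U.ι _ G.hom).symm).trans ((congrArg (· ≫ G.hom) h1).trans hres)
  refine ⟨st, ?_, hιst⟩
  haveI : IsDominant U.ι := AlgebraicGeometry.Opens.isDominant_ι hU
  apply ext_of_isDominant (ι := U.ι)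
  rw [← Category.assoc, hιst, hs, Category.comp_id]
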